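/- Orlicz chord Minkowski inequality: if K, L are star bodies in R^n, 0 ≤ i < n, and φ ∈ Φ, then B_{φ,i}(K,L) ≥ B_i(K) · φ((B_i(L)/B_i(K))^{1/(n-i)}), where B_{φ,i}(K,L) = (1/n)∫_{S^{n-1}} φ(d(L,u)/d(K,u)) d(K,u)^{n-i} dS(u). If φ is strictly convex, equality holds if and only if K and L have similar chord. -/

import Mathlib

open MeasureTheory Metric Filter Set

noncomputable section

/-- A star body in `ℝⁿ`: a compact set, star-shaped about the origin, whose radial
function (recorded on the unit sphere) is positive and continuous. -/
structure StarBody (n : ℕ) where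
  carrier : Set (EuclideanSpace ℝ (Fin n))
  radial : sphere (0 : EuclideanSpace ℝ (Fin n)) 1 → ℝ
  radial_pos : ∀ u, 0 < radial u
  radial_continuous : Continuous radial
  isCompact : IsCompact carrier
  mem_iff : ∀ x, x ∈ carrier ↔ x = 0 ∨
    ∃ (u : sphere (0 : EuclideanSpace ℝ (Fin n)) 1) (c : ℝ),
      0 ≤ c ∧ c ≤ radial u ∧ x = c • (u : EuclideanSpace ℝ (Fin n))

/-- The half chord `d(K,u) = (ρ(K,u) + ρ(K,-u))/2` of a star body in direction `u`. -/
def StarBody.chord {n : ℕ} (K : StarBody n) (u : sphere (0 : EuclideanSpace ℝ (Fin n)) 1) : ℝ :=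
  (K.radial u + K.radial (-u)) / 2

/-- Spherical (surface-type) measure on the unit sphere of `ℝⁿ`. -/
def sphereMeasure (n : ℕ) : Measure (sphere (0 : EuclideanSpace ℝ (Fin n)) 1) :=
  (volume : Measure (EuclideanSpace ℝ (Fin n))).toSphere

/-- The chord integral `B_i(K) = (1/n) ∫_{S^{n-1}} d(K,u)^{n-i} dS(u)`. -/
def chordIntegral (n i : ℕ) (K : StarBody n) : ℝ :=
  (1 / (n : ℝ)) * ∫ u, K.chord u ^ ((n : ℝ) - i) ∂(sphereMeasure n)

/-- `K` and `L` have similar chord: `d(K,·) = λ d(L,·)` for some `λ > 0`. -/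
def SimilarChord {n : ℕ} (K L : StarBody n) : Prop :=
  ∃ lam : ℝ, 0 < lam ∧ ∀ u, K.chord u = lam * L.chord u

/-- The class `Φ`: convex, strictly decreasing `φ : [0,∞) → (0,∞]` with `φ(0) = ∞`
(encoded as a blow-up at `0⁺`), `φ(∞) = 0` and `φ(1) = 1`. -/
structure OrliczPhi where
  toFun : ℝ → ℝ
  pos : ∀ x > (0 : ℝ), 0 < toFun x
  convexOn : ConvexOn ℝ (Set.Ioi 0) toFun
  strictAnti : StrictAntiOn toFun (Set.Ioi 0)
  tendsto_zero : Tendsto toFun (nhdsWithin 0 (Set.Ioi 0)) atTop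
  tendsto_atTop : Tendsto toFun atTop (nhds 0)
  map_one : toFun 1 = 1

/-- The Orlicz mixed chord integral
`B_{φ,i}(K,L) = (1/n) ∫_{S^{n-1}} φ(d(L,u)/d(K,u)) d(K,u)^{n-i} dS(u)`. -/
def orliczMixedChordIntegral (n i : ℕ) (φ : ℝ → ℝ) (K L : StarBody n) : ℝ :=
  (1 / (n : ℝ)) * ∫ u, φ (L.chord u / K.chord u) * K.chord u ^ ((n : ℝ) - i)
    ∂(sphereMeasure n)

---- auxiliary lemmas ----
open scoped ENNReal Pointwise NNReal

instance (n : ℕ) : IsFiniteMeasure (sphereMeasure n) := by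
  unfold sphereMeasure; infer_instance

lemma sphereMeasure_pos {n : ℕ} (hn : 0 < n)
    {U : Set (sphere (0 : EuclideanSpace ℝ (Fin n)) 1)}
    (hU : IsOpen U) (hne : U.Nonempty) : 0 < sphereMeasure n U := by
  rw [sphereMeasure, Measure.toSphere_apply' _ hU.measurableSet]
  have hd : (Module.finrank ℝ (EuclideanSpace ℝ (Fin n)) : ℝ≥0∞) ≠ 0 := by
    simp [finrank_euclideanSpace_fin, hn.ne']
  apply ENNReal.mul_pos hd
  obtain ⟨O, hO, hUO⟩ := isOpen_induced_iff.1 hU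
  set W : Set (EuclideanSpace ℝ (Fin n)) :=
    ((fun x => ‖x‖⁻¹ • x) ⁻¹' O) ∩ (({0}ᶜ : Set _) ∩ ball 0 1) with hW
  have hWopen : IsOpen W := by
    have hcont : ContinuousOn (fun x : EuclideanSpace ℝ (Fin n) => ‖x‖⁻¹ • x)
        (({0}ᶜ : Set _) ∩ ball 0 1) := by
      show ContinuousOn ((fun x : EuclideanSpace ℝ (Fin n) => ‖x‖⁻¹) • (id : EuclideanSpace ℝ (Fin n) → EuclideanSpace ℝ (Fin n))) _
      apply ContinuousOn.smul _ continuousOn_id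
      exact (continuous_norm.continuousOn).inv₀ (by
        intro x hx
        simpa using fun h => hx.1 (by simpa using h))
    have : IsOpen (({0}ᶜ : Set (EuclideanSpace ℝ (Fin n))) ∩ ball 0 1) :=
      (isOpen_compl_singleton).inter isOpen_ball
    simpa [hW, inter_comm] using hcont.isOpen_inter_preimage this hO
  have hWne : W.Nonempty := by
    obtain ⟨u, hu⟩ := hne
    refine ⟨(1/2 : ℝ) • (u : EuclideanSpace ℝ (Fin n)), ?_, ?_, ?_⟩
    · have hnu : ‖(u : EuclideanSpace ℝ (Fin n))‖ = 1 := by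
        simpa using mem_sphere_zero_iff_norm.1 u.2
      have : ‖(1/2 : ℝ) • (u : EuclideanSpace ℝ (Fin n))‖ = 1/2 := by
        rw [norm_smul, hnu]; norm_num
      have : (‖(1/2 : ℝ) • (u : EuclideanSpace ℝ (Fin n))‖)⁻¹ •
          ((1/2 : ℝ) • (u : EuclideanSpace ℝ (Fin n))) = (u : EuclideanSpace ℝ (Fin n)) := by
        rw [this, smul_smul]; norm_num
      rw [Set.mem_preimage, this]
      rw [← hUO] at hu
      exact hu
    · simp only [mem_compl_iff, mem_singleton_iff]
      intro h
      have hnu : ‖(u : EuclideanSpace ℝ (Fin n))‖ = 1 := by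
        simpa using mem_sphere_zero_iff_norm.1 u.2
      have := congrArg norm h
      rw [norm_smul, hnu] at this
      norm_num at this
    · have hnu : ‖(u : EuclideanSpace ℝ (Fin n))‖ = 1 := by
        simpa using mem_sphere_zero_iff_norm.1 u.2
      simp only [mem_ball, dist_zero_right, norm_smul, hnu]
      norm_num
  have hWsub : W ⊆ Ioo (0:ℝ) 1 • (Subtype.val '' U) := by
    rintro x ⟨hxO, hx0, hxb⟩
    have hx0' : x ≠ 0 := by simpa using hx0
    have hnx : 0 < ‖x‖ := norm_pos_iff.2 hx0'
    have hv : ‖(‖x‖⁻¹ • x)‖ = 1 := by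
      rw [norm_smul, norm_inv, norm_norm, inv_mul_cancel₀ hnx.ne']
    set v : sphere (0 : EuclideanSpace ℝ (Fin n)) 1 :=
      ⟨‖x‖⁻¹ • x, by simpa [mem_sphere_zero_iff_norm] using hv⟩ with hvdef
    have hvU : v ∈ U := by rw [← hUO]; exact hxO
    refine ⟨‖x‖, ⟨hnx, by simpa using hxb⟩, ‖x‖⁻¹ • x, ⟨v, hvU, rfl⟩, ?_⟩
    show ‖x‖ • ‖x‖⁻¹ • x = x
    rw [smul_smul, mul_inv_cancel₀ hnx.ne', one_smul]
  exact ((hWopen.measure_pos volume hWne).trans_le (measure_mono hWsub)).ne'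

lemma eq_of_ae_eq_sphere {n : ℕ} (hn : 0 < n)
    {f g : sphere (0 : EuclideanSpace ℝ (Fin n)) 1 → ℝ}
    (hf : Continuous f) (hg : Continuous g) (h : f =ᵐ[sphereMeasure n] g) : f = g := by
  by_contra hne
  obtain ⟨u, hu⟩ := Function.ne_iff.1 hne
  have hopen : IsOpen {u | f u ≠ g u} := isOpen_ne_fun hf hg
  have h0 : sphereMeasure n {u | f u ≠ g u} = 0 := ae_iff.1 h
  exact absurd h0 (sphereMeasure_pos hn hopen ⟨u, hu⟩).ne'

lemma StarBody.chord_pos {n : ℕ} (K : StarBody n)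
    (u : sphere (0 : EuclideanSpace ℝ (Fin n)) 1) : 0 < K.chord u := by
  have := K.radial_pos u
  have := K.radial_pos (-u)
  unfold StarBody.chord; linarith

lemma StarBody.chord_continuous {n : ℕ} (K : StarBody n) : Continuous K.chord := by
  have hneg : Continuous fun u : sphere (0 : EuclideanSpace ℝ (Fin n)) 1 => -u := by
    apply continuous_induced_rng.2
    exact continuous_neg.comp continuous_subtype_val
  exact ((K.radial_continuous.add (K.radial_continuous.comp hneg)).div_const 2)

/-- Orlicz chord Minkowski inequality:
`B_{φ,i}(K,L) ≥ B_i(K) φ((B_i(L)/B_i(K))^{1/(n−i)})`, with equality (for strictly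
convex `φ`) iff `K` and `L` have similar chord. -/
theorem orlicz_chord_minkowski {n i : ℕ} (hi : i < n) (φ : OrliczPhi) (K L : StarBody n) :
    orliczMixedChordIntegral n i φ.toFun K L ≥
      chordIntegral n i K *
        φ.toFun ((chordIntegral n i L / chordIntegral n i K) ^ (1 / ((n : ℝ) - i))) ∧
    (StrictConvexOn ℝ (Set.Ioi 0) φ.toFun →
      (orliczMixedChordIntegral n i φ.toFun K L =
          chordIntegral n i K *
            φ.toFun ((chordIntegral n i L / chordIntegral n i K) ^ (1 / ((n : ℝ) - i))) ↔
        SimilarChord K L)) := by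
  have hn0 : 0 < n := Nat.lt_of_le_of_lt (Nat.zero_le i) hi
  have hnR : (0:ℝ) < n := by exact_mod_cast hn0
  haveI : Nonempty (sphere (0 : EuclideanSpace ℝ (Fin n)) 1) := by
    haveI : Nontrivial (EuclideanSpace ℝ (Fin n)) := by
      apply Module.nontrivial_of_finrank_pos (R := ℝ)
      rw [finrank_euclideanSpace_fin]; exact hn0
    exact (NormedSpace.sphere_nonempty.2 zero_le_one).to_subtype
  set p : ℝ := (n : ℝ) - i with hp_def
  have hp0 : 0 < p := by
    rw [hp_def]; rw [sub_pos]; exact_mod_cast hi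
  have hp1 : 1 ≤ p := by
    rw [hp_def]
    have : (i:ℝ) + 1 ≤ n := by exact_mod_cast hi
    linarith
  set S := sphereMeasure n with hS
  set dK := K.chord with hdK_def
  set dL := L.chord with hdL_def
  have hdKc : Continuous dK := K.chord_continuous
  have hdLc : Continuous dL := L.chord_continuous
  have hdK : ∀ u, 0 < dK u := K.chord_pos
  have hdL : ∀ u, 0 < dL u := L.chord_pos
  set f : sphere (0 : EuclideanSpace ℝ (Fin n)) 1 → ℝ := fun u => dL u / dK u with hf_def
  have hfc : Continuous f := hdLc.div hdKc fun u => (hdK u).ne'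
  have hfpos : ∀ u, 0 < f u := fun u => div_pos (hdL u) (hdK u)
  obtain ⟨u₁, -, ha⟩ := isCompact_univ.exists_isMinOn univ_nonempty hfc.continuousOn
  obtain ⟨u₂, -, hb⟩ := isCompact_univ.exists_isMaxOn univ_nonempty hfc.continuousOn
  set a := f u₁ with ha_def
  set b := f u₂ with hb_def
  have hab : ∀ u, f u ∈ Icc a b := fun u =>
    ⟨isMinOn_iff.1 ha u (mem_univ u), isMaxOn_iff.1 hb u (mem_univ u)⟩
  have ha0 : 0 < a := hfpos u₁
  have hIcc : Icc a b ⊆ Ioi (0:ℝ) := fun x hx => lt_of_lt_of_le ha0 hx.1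
  -- density
  set g : sphere (0 : EuclideanSpace ℝ (Fin n)) 1 → ℝ := fun u => dK u ^ p with hg_def
  have hgpos : ∀ u, 0 < g u := fun u => Real.rpow_pos_of_pos (hdK u) p
  have hgc : Continuous g := by
    apply Continuous.rpow_const hdKc
    exact fun u => Or.inl (hdK u).ne'
  set gN : sphere (0 : EuclideanSpace ℝ (Fin n)) 1 → ℝ≥0 :=
    fun u => ⟨g u, (hgpos u).le⟩ with hgN_def
  have hgNc : Continuous gN := hgc.subtype_mk _
  have hgNm : Measurable gN := hgNc.measurable
  set ν := S.withDensity (fun u => (gN u : ℝ≥0∞)) with hν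
  -- transfer of integrals
  have key : ∀ h : sphere (0 : EuclideanSpace ℝ (Fin n)) 1 → ℝ,
      ∫ u, h u ∂ν = ∫ u, h u * g u ∂S := by
    intro h
    rw [hν, integral_withDensity_eq_integral_smul hgNm]
    congr 1
    funext u
    simp [NNReal.smul_def, hgN_def, mul_comm]
    show (g u) * h u = h u * g u
    exact mul_comm _ _
  haveI hνfin : IsFiniteMeasure ν := by
    obtain ⟨C, -, hC⟩ := isCompact_univ.exists_isMaxOn univ_nonempty hgc.continuousOn
    constructor
    rw [hν, withDensity_apply _ MeasurableSet.univ, Measure.restrict_univ]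
    calc ∫⁻ u, (gN u : ℝ≥0∞) ∂S ≤ ∫⁻ _, ENNReal.ofReal (g C) ∂S := by
          apply lintegral_mono
          intro u
          show (gN u : ℝ≥0∞) ≤ ENNReal.ofReal (g C)
          rw [show ((gN u : ℝ≥0∞)) = ENNReal.ofReal (g u) by
            simp [hgN_def, ENNReal.ofReal, Real.toNNReal_of_nonneg (hgpos u).le]; rfl]
          exact ENNReal.ofReal_le_ofReal (isMaxOn_iff.1 hC u (mem_univ u))
      _ = ENNReal.ofReal (g C) * S univ := by rw [lintegral_const]
      _ < ⊤ := ENNReal.mul_lt_top ENNReal.ofReal_lt_top (measure_lt_top S univ)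
  haveI hνne : NeZero ν := by
    refine ⟨fun h0 => ?_⟩
    have h1 : ν univ = 0 := by rw [h0]; rfl
    rw [hν, withDensity_apply_eq_zero (hgNm.coe_nnreal_ennreal)] at h1
    have : {x | ((gN x : ℝ≥0∞)) ≠ 0} = univ := by
      ext x
      simp only [mem_setOf_eq, mem_univ, iff_true, Ne, ENNReal.coe_eq_zero]
      intro h
      exact (hgpos x).ne' (congrArg (fun t : ℝ≥0 => (t:ℝ)) h)
    rw [this, univ_inter] at h1
    exact absurd h1 (sphereMeasure_pos hn0 isOpen_univ univ_nonempty).ne'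
  have hint : ∀ {h : sphere (0 : EuclideanSpace ℝ (Fin n)) 1 → ℝ},
      Continuous h → Integrable h ν := by
    intro h hc
    have : HasCompactSupport h := by
      apply HasCompactSupport.of_compactSpace
    exact hc.integrable_of_hasCompactSupport this
  -- total mass
  set T : ℝ := (ν univ).toReal with hT_def
  have hTpos : 0 < T := ENNReal.toReal_pos (NeZero.ne' (ν univ)).symm (measure_ne_top ν univ)
  have hT : T = ∫ u, g u ∂S := by
    have := key (fun _ => (1:ℝ))
    rw [hT_def, ← measureReal_def]
    simpa using this
  -- chord integrals
  have hBK : chordIntegral n i K = (1/(n:ℝ)) * T := by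
    rw [chordIntegral, hT]
  have hBKpos : 0 < chordIntegral n i K := by
    rw [hBK]; positivity
  have hBL : chordIntegral n i L = (1/(n:ℝ)) * ∫ u, f u ^ p ∂ν := by
    rw [chordIntegral, key]
    have he : ∀ u, L.chord u ^ ((n:ℝ) - i) = f u ^ p * g u := by
      intro u
      show dL u ^ p = (dL u / dK u) ^ p * (dK u ^ p)
      rw [Real.div_rpow (hdL u).le (hdK u).le]
      exact (div_mul_cancel₀ _ (Real.rpow_pos_of_pos (hdK u) p).ne').symm
    rw [integral_congr_ae (ae_of_all _ he)]
  -- averages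
  set M : ℝ := ⨍ u, f u ∂ν with hM_def
  set Q : ℝ := ⨍ u, f u ^ p ∂ν with hQ_def
  have hφcontIoi : ContinuousOn φ.toFun (Ioi 0) := ConvexOn.continuousOn isOpen_Ioi φ.convexOn
  have hφfc : Continuous (fun u => φ.toFun (f u)) :=
    hφcontIoi.comp_continuous hfc fun u => hfpos u
  have hM_mem : M ∈ Icc a b :=
    (convex_Icc a b).average_mem isClosed_Icc (ae_of_all _ hab) (hint hfc)
  have hMpos : 0 < M := lt_of_lt_of_le ha0 hM_mem.1
  -- Jensen 1
  have hJ1 : φ.toFun M ≤ ⨍ u, φ.toFun (f u) ∂ν := by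
    apply ConvexOn.map_average_le (φ.convexOn.subset hIcc (convex_Icc a b))
      (hφcontIoi.mono hIcc) isClosed_Icc (ae_of_all _ hab) (hint hfc) (hint hφfc)
  -- Jensen 2
  have hrpc : Continuous (fun x : ℝ => x ^ p) := Real.continuous_rpow_const hp0.le
  have hJ2 : M ^ p ≤ Q := by
    apply ConvexOn.map_average_le
      ((convexOn_rpow hp1).subset (fun x hx => le_trans ha0.le hx.1) (convex_Icc a b))
      hrpc.continuousOn isClosed_Icc (ae_of_all _ hab) (hint hfc)
      (hint (hrpc.comp hfc))
  have hQpos : 0 < Q := lt_of_lt_of_le (Real.rpow_pos_of_pos hMpos p) hJ2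
  set R : ℝ := Q ^ (1/p) with hR_def
  have hRpos : 0 < R := Real.rpow_pos_of_pos hQpos _
  have hMR : M ≤ R := by
    have : M = (M ^ p) ^ (1/p) := by
      rw [← Real.rpow_mul hMpos.le, mul_one_div, div_self hp0.ne', Real.rpow_one]
    rw [this, hR_def]
    exact Real.rpow_le_rpow (Real.rpow_nonneg hMpos.le p) hJ2 (by positivity)
  have hφMR : φ.toFun R ≤ φ.toFun M := by
    rcases eq_or_lt_of_le hMR with h | h
    · rw [h]
    · exact (φ.strictAnti (mem_Ioi.2 hMpos) (mem_Ioi.2 hRpos) h).le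
  -- identify R with the statement's expression
  have hQeq : chordIntegral n i L / chordIntegral n i K = Q := by
    rw [hBL, hBK, hQ_def, average_eq, smul_eq_mul]
    have h1n : (1/(n:ℝ)) ≠ 0 := by positivity
    rw [mul_div_mul_left _ _ h1n, measureReal_def, ← hT_def]
    field_simp
  have hRe : (chordIntegral n i L / chordIntegral n i K) ^ (1/p) = R := by
    rw [hQeq, hR_def]
  -- LHS expression
  have hLHS : orliczMixedChordIntegral n i φ.toFun K L
      = (1/(n:ℝ)) * (T * ⨍ u, φ.toFun (f u) ∂ν) := by
    have h1 : T * ⨍ u, φ.toFun (f u) ∂ν = ∫ u, φ.toFun (f u) ∂ν := by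
      rw [average_eq, smul_eq_mul, measureReal_def, ← hT_def, ← mul_assoc, mul_inv_cancel₀ hTpos.ne', one_mul]
    rw [h1, key]
    rfl
  have main_ineq : orliczMixedChordIntegral n i φ.toFun K L ≥
      chordIntegral n i K * φ.toFun R := by
    rw [hLHS, hBK]
    have h1 : φ.toFun R ≤ ⨍ u, φ.toFun (f u) ∂ν := le_trans hφMR hJ1
    have h2 : (0:ℝ) < (1/(n:ℝ)) * T := by positivity
    calc (1/(n:ℝ)) * T * φ.toFun R ≤ (1/(n:ℝ)) * T * ⨍ u, φ.toFun (f u) ∂ν :=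
          mul_le_mul_of_nonneg_left h1 h2.le
      _ = (1/(n:ℝ)) * (T * ⨍ u, φ.toFun (f u) ∂ν) := by ring
  constructor
  · rw [hRe]; exact main_ineq
  · intro hstrict
    constructor
    · -- equality → similar chord
      intro heq
      rw [hRe] at heq
      rw [hLHS, hBK] at heq
      have hav : ⨍ u, φ.toFun (f u) ∂ν = φ.toFun R := by
        have h2 : (0:ℝ) < (1/(n:ℝ)) * T := by positivity
        have := heq
        rw [show (1/(n:ℝ)) * (T * ⨍ u, φ.toFun (f u) ∂ν)
            = ((1/(n:ℝ)) * T) * ⨍ u, φ.toFun (f u) ∂ν by ring] at this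
        exact mul_left_cancel₀ h2.ne' this
      have havM : φ.toFun M = ⨍ u, φ.toFun (f u) ∂ν := by
        have h3 : ⨍ u, φ.toFun (f u) ∂ν ≤ φ.toFun M := hav ▸ hφMR
        exact le_antisymm hJ1 h3
      have := StrictConvexOn.ae_eq_const_or_map_average_lt
        (hstrict.subset hIcc (convex_Icc a b)) (hφcontIoi.mono hIcc) isClosed_Icc
        (ae_of_all _ hab) (hint hfc) (hint hφfc)
      rcases this with hae | hlt
      · -- f is a.e. constant M w.r.t. ν; upgrade to everywhere
        have hSae : f =ᵐ[S] Function.const _ M := by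
          have hν0 : ν {u | f u ≠ Function.const _ M u} = 0 := ae_iff.1 hae
          rw [hν, withDensity_apply_eq_zero (hgNm.coe_nnreal_ennreal)] at hν0
          have huniv : {x | ((gN x : ℝ≥0∞)) ≠ 0} = univ := by
            ext x
            simp only [mem_setOf_eq, mem_univ, iff_true, Ne, ENNReal.coe_eq_zero]
            intro h
            exact (hgpos x).ne' (congrArg (fun t : ℝ≥0 => (t:ℝ)) h)
          rw [huniv, univ_inter] at hν0
          exact ae_iff.2 hν0
        have hfeq : f = Function.const _ M :=
          eq_of_ae_eq_sphere hn0 hfc continuous_const hSae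
        refine ⟨M⁻¹, inv_pos.2 hMpos, fun u => ?_⟩
        have hfu : L.chord u / K.chord u = M := by
          have : f u = M := by rw [hfeq]; rfl
          exact this
        rw [div_eq_iff (K.chord_pos u).ne'] at hfu
        rw [hfu, ← mul_assoc, inv_mul_cancel₀ hMpos.ne', one_mul]
      · exfalso
        rw [← havM] at hlt
        exact lt_irrefl _ hlt
    · -- similar chord → equality
      rintro ⟨lam, hlam, hKL⟩
      have hfconst : ∀ u, L.chord u / K.chord u = lam⁻¹ := by
        intro u
        rw [hKL u, mul_comm, div_mul_eq_div_div, div_self (L.chord_pos u).ne', one_div]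
      have hLc : ∀ u, L.chord u = lam⁻¹ * K.chord u := by
        intro u
        rw [hKL u, ← mul_assoc, inv_mul_cancel₀ hlam.ne', one_mul]
      have hBLe : chordIntegral n i L = lam⁻¹ ^ p * chordIntegral n i K := by
        rw [chordIntegral, chordIntegral]
        rw [show ∫ u, L.chord u ^ ((n:ℝ) - i) ∂(sphereMeasure n)
            = ∫ u, lam⁻¹ ^ p * (K.chord u ^ ((n:ℝ) - i)) ∂(sphereMeasure n) by
          apply integral_congr_ae
          filter_upwards with u
          rw [show L.chord u = lam⁻¹ * K.chord u from hLc u,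
            Real.mul_rpow (by positivity) (K.chord_pos u).le]]
        rw [integral_const_mul]
        ring
      have hratio : chordIntegral n i L / chordIntegral n i K = lam⁻¹ ^ p := by
        rw [hBLe]
        field_simp
      have hRval : (chordIntegral n i L / chordIntegral n i K) ^ (1/p) = lam⁻¹ := by
        rw [hratio, ← Real.rpow_mul (by positivity), mul_one_div, div_self hp0.ne',
          Real.rpow_one]
      rw [hRval]
      rw [orliczMixedChordIntegral]
      rw [show ∫ u, φ.toFun (L.chord u / K.chord u) * K.chord u ^ ((n:ℝ) - i) ∂(sphereMeasure n)
          = φ.toFun lam⁻¹ * ∫ u, K.chord u ^ ((n:ℝ) - i) ∂(sphereMeasure n) by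
        rw [← integral_const_mul]
        apply integral_congr_ae
        filter_upwards with u
        rw [show L.chord u / K.chord u = lam⁻¹ from hfconst u]]
      rw [chordIntegral]
      ring
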